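/- arXiv:1604.00076 — 8 statements merged into one kernel-verified Lean document; each statement's English description precedes it below -/
import Mathlib

section
/- Let I be a finite set, let C = (C_1, …, C_k) be a set composition of I, and let n ∈ ℕ. Then the number of functions f : I → Fin n whose level-set composition comp(f) equals C is the binomial coefficient choose(n, k). -/
/-- A set composition of a finite set `I`: a finite sequence of nonempty pairwise
disjoint subsets of `I` whose union is `I`. -/
def IsSetComposition {I : Type*} [Fintype I] [DecidableEq I] (C : List (Finset I)) : Prop :=
  (∀ B ∈ C, B.Nonempty) ∧ C.Pairwise Disjoint ∧ C.foldr (· ∪ ·) ∅ = Finset.univ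

/-- The level-set composition of `f : I → α`: the list of preimages of the distinct
values attained by `f`, listed in increasing order of the values. -/
def levelComp {I : Type*} [Fintype I] [DecidableEq I] {α : Type*} [LinearOrder α]
    (f : I → α) : List (Finset I) :=
  ((Finset.univ.image f).sort (· ≤ ·)).map fun v => Finset.univ.filter fun i => f i = v

private lemma mem_foldr_union {I : Type*} [DecidableEq I] (L : List (Finset I)) (i : I) :
    i ∈ L.foldr (· ∪ ·) ∅ ↔ ∃ B ∈ L, i ∈ B := by
  induction L with
  | nil => simp
  | cons B L ih => simp [ih]

/-- `levelComp` with the ambient `DecidableEq (Fin n)` instance. -/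
private lemma levelComp_def {I : Type*} [Fintype I] [DecidableEq I] {n : ℕ} (f : I → Fin n) :
    levelComp f
      = ((Finset.univ.image f).sort (· ≤ ·)).map
          fun v => Finset.univ.filter fun i => f i = v := by
  rw [levelComp]

/-- The number of functions `f : I → Fin n` whose level-set composition equals a given
set composition `C` of length `k` is `choose n k`. -/
theorem count_levelComp_eq {I : Type*} [Fintype I] [DecidableEq I]
    (C : List (Finset I)) (hC : IsSetComposition C) (n : ℕ) :
    (Finset.univ.filter fun f : I → Fin n => levelComp f = C).card = n.choose C.length := by
  obtain ⟨hne, hdisj, hunion⟩ := hC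
  have hpair : ∀ a b, ∀ (ha : a < C.length) (hb : b < C.length), a ≠ b →
      Disjoint C[a] C[b] := by
    intro a b ha hb hab
    rcases hab.lt_or_gt with h | h
    · exact List.pairwise_iff_getElem.mp hdisj a b ha hb h
    · exact (List.pairwise_iff_getElem.mp hdisj b a hb ha h).symm
  have hmemC : ∀ i : I, ∃ j : ℕ, ∃ h : j < C.length, i ∈ C[j] := by
    intro i
    have : i ∈ C.foldr (· ∪ ·) ∅ := hunion ▸ Finset.mem_univ i
    obtain ⟨B, hB, hiB⟩ := (mem_foldr_union C i).mp this
    obtain ⟨j, hj, rfl⟩ := List.getElem_of_mem hB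
    exact ⟨j, hj, hiB⟩
  -- basic facts about a function whose level composition is `C`
  have hblocks : ∀ f : I → Fin n,
      (((Finset.univ.image f).sort (· ≤ ·)).map
          fun v => Finset.univ.filter fun i => f i = v) = C →
      ∀ j (hj : j < C.length),
        ∃ hj' : j < ((Finset.univ.image f).sort (· ≤ ·)).length,
          C[j] = Finset.univ.filter
            (fun i => f i = ((Finset.univ.image f).sort (· ≤ ·))[j]) := by
    intro f hf j hj
    have hlen : ((Finset.univ.image f).sort (· ≤ ·)).length = C.length := by
      have := congrArg List.length hf
      simpa using this
    refine ⟨hlen ▸ hj, ?_⟩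
    have := (List.getElem_of_eq hf.symm hj)
    rw [this, List.getElem_map]
  have hcount : (Finset.powersetCard C.length (Finset.univ : Finset (Fin n))).card
      = n.choose C.length := by
    rw [Finset.card_powersetCard, Finset.card_fin]
  rw [← hcount]
  refine Finset.card_bij (fun f _ => Finset.univ.image f) ?_ ?_ ?_
  · -- maps into powersetCard
    intro f hf
    rw [Finset.mem_filter, levelComp_def] at hf
    have hlen : ((Finset.univ.image f).sort (· ≤ ·)).length = C.length := by
      have := congrArg List.length hf.2
      simpa using this
    rw [Finset.mem_powersetCard]
    refine ⟨Finset.subset_univ _, ?_⟩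
    rw [← Finset.length_sort (α := Fin n) (· ≤ ·), hlen]
  · -- injective
    intro f hf g hg himg
    rw [Finset.mem_filter, levelComp_def] at hf hg
    funext i
    obtain ⟨j, hj, hij⟩ := hmemC i
    obtain ⟨hj', hCj⟩ := hblocks f hf.2 j hj
    obtain ⟨hj'', hCj'⟩ := hblocks g hg.2 j hj
    have h1 : f i = ((Finset.univ.image f).sort (· ≤ ·))[j] := by
      have := hCj ▸ hij
      simpa using this
    have h2 : g i = ((Finset.univ.image g).sort (· ≤ ·))[j] := by
      have := hCj' ▸ hij
      simpa using this
    have himg' : Finset.univ.image f = Finset.univ.image g := himg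
    rw [h1, h2]
    exact List.getElem_of_eq (by rw [himg']) hj'
  · -- surjective
    intro S hS
    rw [Finset.mem_powersetCard] at hS
    set L := S.sort (· ≤ ·) with hLdef
    have hLlen : L.length = C.length := by rw [hLdef, Finset.length_sort, hS.2]
    have hLnd : L.Nodup := Finset.sort_nodup _ _
    have hidx : ∀ i : I, C.findIdx (fun B => decide (i ∈ B)) < L.length := by
      intro i
      rw [hLlen]
      apply List.findIdx_lt_length_of_exists
      obtain ⟨j, hj, hij⟩ := hmemC i
      exact ⟨C[j], List.getElem_mem hj, by simpa using hij⟩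
    have hmemidx : ∀ i : I,
        i ∈ C[C.findIdx (fun B => decide (i ∈ B))]'(hLlen ▸ hidx i) := by
      intro i
      have := List.findIdx_getElem (p := fun B => decide (i ∈ B)) (xs := C)
        (w := hLlen ▸ hidx i)
      simpa using this
    have huniq : ∀ (i : I) (j : ℕ) (hj : j < C.length), i ∈ C[j] →
        C.findIdx (fun B => decide (i ∈ B)) = j := by
      intro i j hj hij
      by_contra hne'
      exact Finset.disjoint_left.mp
        (hpair _ _ (hLlen ▸ hidx i) hj hne') (hmemidx i) hij
    set f : I → Fin n := fun i => L[C.findIdx (fun B => decide (i ∈ B))]'(hidx i) with hfdef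
    have himg : Finset.univ.image f = S := by
      apply Finset.Subset.antisymm
      · intro v hv
        rw [Finset.mem_image] at hv
        obtain ⟨i, _, rfl⟩ := hv
        have : f i ∈ L := List.getElem_mem _
        rwa [hLdef, Finset.mem_sort] at this
      · intro v hv
        rw [← Finset.mem_sort (· ≤ ·), ← hLdef] at hv
        obtain ⟨j, hj, rfl⟩ := List.getElem_of_mem hv
        obtain ⟨i, hi⟩ := hne C[j] (List.getElem_mem (hLlen ▸ hj))
        rw [Finset.mem_image]
        refine ⟨i, Finset.mem_univ i, ?_⟩
        simp only [hfdef]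
        congr 1
        exact huniq i j (hLlen ▸ hj) hi
    have hlevel : levelComp f = C := by
      rw [levelComp_def, himg, ← hLdef]
      apply List.ext_getElem (by simpa using hLlen)
      intro j h1 h2
      rw [List.getElem_map]
      ext i
      simp only [Finset.mem_filter, Finset.mem_univ, true_and]
      have hj' : j < C.length := by simpa [hLlen] using h2
      constructor
      · intro hfi
        have hidxj : C.findIdx (fun B => decide (i ∈ B)) = j := by
          have hget : L.get ⟨C.findIdx (fun B => decide (i ∈ B)), hidx i⟩
              = L.get ⟨j, by simpa using h1⟩ := by
            simpa [List.get_eq_getElem] using hfi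
          have := List.nodup_iff_injective_get.mp hLnd hget
          simpa using this
        have := hmemidx i
        simp only [hidxj] at this
        exact this
      · intro hij
        have heq := huniq i j hj' hij
        show L[C.findIdx (fun B => decide (i ∈ B))]'(hidx i) = _
        simp only [heq]
    exact ⟨f, Finset.mem_filter.mpr ⟨Finset.mem_univ f, hlevel⟩, himg⟩
end

section
/- Let I be a finite set and C = (C_1, …, C_k) a set composition of I, and for 1 ≤ j ≤ k set s_j = |C_j| + |C_{j+1}| + ⋯ + |C_k|. Let F_C ∈ ℤ[[X]] be the formal power series whose m-th coefficient is the number of functions a : I → ℕ with a(i) ≥ 1 for all i, level-set composition comp(a) = C, and Σ_{i ∈ I} a(i) = m. Then F_C · ∏_{j=1}^{k} (1 − X^{s_j}) = X^{s_1 + s_2 + ⋯ + s_k}. -/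
/-- The suffix sums `s_j = |C_j| + ⋯ + |C_k|` (with `j` zero-indexed). -/
def suffixSize {I : Type*} (C : List (Finset I)) (j : ℕ) : ℕ :=
  ((C.drop j).map Finset.card).sum

namespace GenFunAux

noncomputable def Dser (s : ℕ) : PowerSeries ℤ := PowerSeries.mk fun m => if s ∣ m then 1 else 0

lemma coeff_X_pow_mul_Dser (s m : ℕ) :
    PowerSeries.coeff m (PowerSeries.X ^ s * Dser s) = if s ≤ m ∧ s ∣ m then 1 else 0 := by
  rw [mul_comm, PowerSeries.coeff_mul_X_pow', Dser]
  simp only [PowerSeries.coeff_mk]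
  by_cases h1 : s ≤ m
  · have hiff : s ∣ m - s ↔ s ∣ m :=
      ⟨fun hd => Nat.sub_add_cancel h1 ▸ dvd_add hd dvd_rfl, fun hd => Nat.dvd_sub hd dvd_rfl⟩
    simp [h1, hiff]
  · simp [h1]

lemma one_sub_X_pow_mul_Dser {s : ℕ} (hs : 1 ≤ s) :
    ((1 : PowerSeries ℤ) - PowerSeries.X ^ s) * Dser s = 1 := by
  ext n
  rw [sub_mul, one_mul, map_sub, coeff_X_pow_mul_Dser, PowerSeries.coeff_one, Dser,
    PowerSeries.coeff_mk]
  rcases Nat.eq_zero_or_pos n with h | h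
  · subst h; simp [Nat.not_succ_le_zero]; omega
  · by_cases hd : s ∣ n
    · have : s ≤ n := Nat.le_of_dvd h hd
      simp [hd, this]; omega
    · simp [hd]; omega

lemma mem_foldr_union {I : Type*} [DecidableEq I] (L : List (Finset I)) (i : I) :
    i ∈ L.foldr (· ∪ ·) ∅ ↔ ∃ B ∈ L, i ∈ B := by
  induction L with
  | nil => simp
  | cons B T ih => simp [ih]

lemma sum_foldr_union {I : Type*} [DecidableEq I] {M : Type*} [AddCommMonoid M] (f : I → M) :
    ∀ (L : List (Finset I)), L.Pairwise Disjoint →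
      ∑ i ∈ L.foldr (· ∪ ·) ∅, f i = (L.map fun B => ∑ i ∈ B, f i).sum := by
  intro L hL
  induction L with
  | nil => simp
  | cons B T ih =>
    rw [List.pairwise_cons] at hL
    have hdisj : Disjoint B (T.foldr (· ∪ ·) ∅) := by
      rw [Finset.disjoint_left]
      intro x hx hx'
      obtain ⟨B', hB', hxB'⟩ := (mem_foldr_union T x).mp hx'
      exact (Finset.disjoint_left.mp (hL.1 B' hB') hx) hxB'
    simp only [List.foldr_cons, List.map_cons, List.sum_cons]
    rw [Finset.sum_union hdisj, ih hL.2]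

lemma sum_partition {I : Type*} [Fintype I] [DecidableEq I] {M : Type*} [AddCommMonoid M]
    (C : List (Finset I)) (hC : IsSetComposition C) (f : I → M) :
    ∑ i, f i = ∑ j : Fin C.length, ∑ i ∈ C.get j, f i := by
  rw [← hC.2.2, sum_foldr_union f C hC.2.1]
  conv_lhs => rw [← List.ofFn_get C]
  rw [List.map_ofFn, List.sum_ofFn]
  rfl

lemma exists_mem_block {I : Type*} [Fintype I] [DecidableEq I] {C : List (Finset I)}
    (hC : IsSetComposition C) (i : I) : ∃ j : Fin C.length, i ∈ C.get j := by
  have : i ∈ C.foldr (· ∪ ·) ∅ := hC.2.2 ▸ Finset.mem_univ i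
  obtain ⟨B, hB, hiB⟩ := (mem_foldr_union C i).mp this
  obtain ⟨j, rfl⟩ := List.mem_iff_get.mp hB
  exact ⟨j, hiB⟩

lemma levelComp_eq_iff {I : Type*} [Fintype I] [DecidableEq I] {C : List (Finset I)}
    (hC : IsSetComposition C) (a : I → ℕ) :
    levelComp a = C ↔
      ((∀ j : Fin C.length, ∀ i ∈ C.get j, ∀ i' ∈ C.get j, a i = a i') ∧
       (∀ j j' : Fin C.length, j < j' → ∀ i ∈ C.get j, ∀ i' ∈ C.get j', a i < a i')) := by
  constructor
  · rintro rfl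
    have hwlt : ((Finset.univ.image a).sort (· ≤ ·)).Pairwise (· < ·) := (Finset.sortedLT_sort _).pairwise
    have hlen : ∀ j : Fin (levelComp a).length,
        (j : ℕ) < ((Finset.univ.image a).sort (· ≤ ·)).length := fun j => by
      simpa [levelComp] using j.2
    constructor
    · intro j i hi i' hi'
      simp only [List.get_eq_getElem] at hi hi'
      simp only [levelComp, List.getElem_map, Finset.mem_filter] at hi hi'
      rw [hi.2, hi'.2]
    · intro j j' hjj' i hi i' hi'
      simp only [List.get_eq_getElem] at hi hi'
      simp only [levelComp, List.getElem_map, Finset.mem_filter] at hi hi'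
      rw [hi.2, hi'.2]
      have := List.pairwise_iff_get.mp hwlt ⟨j, hlen j⟩ ⟨j', hlen j'⟩ hjj'
      simpa using this
  · rintro ⟨hconst, hmono⟩
    have hne : ∀ j : Fin C.length, (C.get j).Nonempty := fun j => hC.1 _ (C.get_mem _)
    set pick : Fin C.length → I := fun j => (hne j).choose with hpickdef
    have hpick : ∀ j, pick j ∈ C.get j := fun j => (hne j).choose_spec
    set v : Fin C.length → ℕ := fun j => a (pick j) with hv
    have hav : ∀ (j : Fin C.length), ∀ i ∈ C.get j, a i = v j := fun j i hi =>
      hconst j i hi (pick j) (hpick j)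
    have hvm : StrictMono v := fun j j' h => hmono j j' h _ (hpick j) _ (hpick j')
    have himg : Finset.univ.image a = Finset.image v Finset.univ := by
      ext x
      simp only [Finset.mem_image, Finset.mem_univ, true_and]
      constructor
      · rintro ⟨i, rfl⟩
        obtain ⟨j, hj⟩ := exists_mem_block hC i
        exact ⟨j, (hav j i hj).symm⟩
      · rintro ⟨j, rfl⟩
        exact ⟨pick j, rfl⟩
    have hsort : (Finset.univ.image a).sort (· ≤ ·) = List.ofFn v := by
      refine List.Perm.eq_of_pairwise' (Finset.pairwise_sort _ _)
        (List.pairwise_ofFn.mpr fun i j h => (hvm h).le) ?_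
      apply List.perm_of_nodup_nodup_toFinset_eq (Finset.sort_nodup _ _)
        ((List.nodup_ofFn).mpr hvm.injective)
      rw [Finset.sort_toFinset, himg]
      ext x
      simp [List.mem_ofFn]
    rw [levelComp, hsort, List.map_ofFn]
    conv_rhs => rw [← List.ofFn_get C]
    congr 1
    funext j
    ext i
    simp only [Function.comp_apply, Finset.mem_filter, Finset.mem_univ, true_and]
    constructor
    · intro hx
      obtain ⟨j', hj'⟩ := exists_mem_block hC i
      have : v j' = v j := by rw [← hav j' i hj', hx]
      rwa [hvm.injective this] at hj'
    · intro hi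
      exact hav j i hi

lemma list_sum_map_card {I : Type*} (L : List (Finset I)) :
    (L.map Finset.card).sum = ∑ j ∈ Finset.range L.length, (L.getD j ∅).card := by
  induction L with
  | nil => simp
  | cons B T ih =>
    rw [List.map_cons, List.sum_cons, ih, List.length_cons, Finset.sum_range_succ']
    simp [List.getD_cons_succ, List.getD_cons_zero, Nat.add_comm]

lemma suffixSize_eq_sum_Ico {I : Type*} (C : List (Finset I)) (t : ℕ) :
    suffixSize C t = ∑ j ∈ Finset.Ico t C.length, (C.getD j ∅).card := by
  rw [suffixSize, Finset.sum_Ico_eq_sum_range, list_sum_map_card, List.length_drop]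
  apply Finset.sum_congr rfl
  intro u hu
  rw [Finset.mem_range] at hu
  congr 1
  rcases le_or_gt t C.length with h | h
  · have h1 : t + u < C.length := by omega
    rw [List.getD_eq_getElem _ _ (by simpa using (by omega : u < C.length - t)),
        List.getD_eq_getElem _ _ h1]
    exact (List.getElem_drop' ..).symm
  · omega

lemma partial_sums_eq (v : ℕ → ℕ) (k : ℕ)
    (hmono : ∀ t, t + 1 < k → v t ≤ v (t + 1)) :
    ∀ j, j < k → ∑ t ∈ Finset.range (j + 1), (v t - if t = 0 then 0 else v (t - 1)) = v j := by
  intro j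
  induction j with
  | zero => simp
  | succ j ih =>
    intro hj
    rw [Finset.sum_range_succ, ih (by omega), if_neg (Nat.succ_ne_zero j)]
    have := hmono j (by omega)
    simp only [Nat.add_sub_cancel]
    omega

lemma abel_sum (c b : ℕ → ℕ) (k : ℕ) :
    ∑ j ∈ Finset.range k, c j * (∑ t ∈ Finset.range (j + 1), b t)
      = ∑ t ∈ Finset.range k, (∑ j ∈ Finset.Ico t k, c j) * b t := by
  simp_rw [Finset.mul_sum, Finset.sum_mul]
  exact Finset.sum_comm' (by intro x y; simp [Finset.mem_range, Finset.mem_Ico]; omega)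

variable {I : Type*} [Fintype I] [DecidableEq I]

noncomputable def pickF (C : List (Finset I)) (hC : IsSetComposition C) (j : Fin C.length) : I :=
  (hC.1 _ (List.get_mem C j)).choose

noncomputable def blkF (C : List (Finset I)) (hC : IsSetComposition C) (i : I) : Fin C.length :=
  (exists_mem_block hC i).choose

noncomputable def vNF (C : List (Finset I)) (hC : IsSetComposition C) (a : I → ℕ) (t : ℕ) : ℕ :=
  if h : t < C.length then a (pickF C hC ⟨t, h⟩) else 0

noncomputable def bF (C : List (Finset I)) (hC : IsSetComposition C) (a : I → ℕ) (t : ℕ) : ℕ :=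
  vNF C hC a t - if t = 0 then 0 else vNF C hC a (t - 1)

noncomputable def LF (C : List (Finset I)) (hC : IsSetComposition C) (a : I → ℕ) : ℕ →₀ ℕ :=
  Finsupp.onFinset (Finset.range C.length)
    (fun t => if t < C.length then suffixSize C t * bF C hC a t else 0)
    (fun t h => Finset.mem_range.mpr (by by_contra hk; simp [hk] at h))

noncomputable def AF (C : List (Finset I)) (hC : IsSetComposition C) (l : ℕ →₀ ℕ) (i : I) : ℕ :=
  ∑ t ∈ Finset.range ((blkF C hC i : ℕ) + 1), l t / suffixSize C t

lemma sum_blocks (C : List (Finset I)) (hC : IsSetComposition C) (a : I → ℕ) (w : ℕ → ℕ)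
    (h : ∀ j : Fin C.length, ∀ i ∈ C.get j, a i = w j) :
    ∑ i, a i = ∑ j ∈ Finset.range C.length, (C.getD j ∅).card * w j := by
  rw [sum_partition C hC a,
    ← Fin.sum_univ_eq_sum_range (fun j => (C.getD j ∅).card * w j) C.length]
  apply Finset.sum_congr rfl
  intro j _
  rw [Finset.sum_congr rfl fun i hi => h j i hi, Finset.sum_const, smul_eq_mul]
  congr 1
  rw [List.getD_eq_getElem _ _ j.2]
  rfl


lemma count_eq (C : List (Finset I)) (hC : IsSetComposition C) (m : ℕ) :
    Nat.card {a : I → ℕ // (∀ i, 1 ≤ a i) ∧ levelComp a = C ∧ ∑ i, a i = m}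
      = (((Finset.range C.length).finsuppAntidiag m).filter
          (fun l => ∀ j ∈ Finset.range C.length,
            suffixSize C j ≤ l j ∧ suffixSize C j ∣ l j)).card := by
  classical
  rw [← Nat.card_eq_finsetCard]
  set k := C.length with hk
  have hc1 : ∀ j < k, 1 ≤ (C.getD j ∅).card := by
    intro j hj
    rw [List.getD_eq_getElem _ _ hj]
    exact Finset.card_pos.mpr (hC.1 _ (List.getElem_mem _))
  have hs1 : ∀ t < k, 1 ≤ suffixSize C t := by
    intro t ht
    rw [suffixSize_eq_sum_Ico]
    exact le_trans (hc1 t ht)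
      (Finset.single_le_sum (f := fun j => (C.getD j ∅).card) (fun i _ => Nat.zero_le _)
        (Finset.mem_Ico.mpr ⟨le_refl t, ht⟩))
  have hpick : ∀ j : Fin k, pickF C hC j ∈ C.get j := fun j => (hC.1 _ (List.get_mem C j)).choose_spec
  have hblkmem : ∀ i : I, i ∈ C.get (blkF C hC i) := fun i => (exists_mem_block hC i).choose_spec
  have hdisj : ∀ j j' : Fin k, j ≠ j' → Disjoint (C.get j) (C.get j') := by
    intro j j' hne
    rcases lt_or_gt_of_ne hne with h | h
    · exact List.pairwise_iff_get.mp hC.2.1 j j' h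
    · exact (List.pairwise_iff_get.mp hC.2.1 j' j h).symm
  have huniq : ∀ (i : I) (j : Fin k), i ∈ C.get j → blkF C hC i = j := by
    intro i j hj
    by_contra hne
    exact (Finset.disjoint_left.mp (hdisj _ _ hne) (hblkmem i)) hj
  have hLapp : ∀ (a : I → ℕ) (t : ℕ),
      LF C hC a t = if t < k then suffixSize C t * bF C hC a t else 0 := fun a t => rfl
  -- facts about vNF for a with levelComp a = C
  have hvN : ∀ a : I → ℕ, levelComp a = C →
      (∀ j : Fin k, ∀ i ∈ C.get j, a i = vNF C hC a j) := by
    intro a haC j i hi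
    rw [vNF, dif_pos j.2]
    exact ((levelComp_eq_iff hC a).mp haC).1 j i hi _ (hpick j)
  have hvmono : ∀ a : I → ℕ, levelComp a = C →
      (∀ t, t + 1 < k → vNF C hC a t < vNF C hC a (t + 1)) := by
    intro a haC t ht
    rw [vNF, vNF, dif_pos (by omega : t < k), dif_pos ht]
    exact ((levelComp_eq_iff hC a).mp haC).2 ⟨t, by omega⟩ ⟨t + 1, ht⟩
      (by simp [Fin.lt_def]) _ (hpick _) _ (hpick _)
  have hb1 : ∀ a : I → ℕ, (∀ i, 1 ≤ a i) → levelComp a = C →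
      (∀ t < k, 1 ≤ bF C hC a t) := by
    intro a ha1 haC t ht
    rcases Nat.eq_zero_or_pos t with rfl | htpos
    · have : 1 ≤ vNF C hC a 0 := by rw [vNF, dif_pos ht]; exact ha1 _
      simpa [bF] using this
    · have h1 : t - 1 + 1 < k := by omega
      have h2 := hvmono a haC (t - 1) h1
      have ht1 : t - 1 + 1 = t := by omega
      rw [ht1] at h2
      rw [bF, if_neg (by omega)]
      omega
  -- total sum identity
  have hsum : ∀ a : I → ℕ, levelComp a = C →
      ∑ i, a i = ∑ t ∈ Finset.range k, suffixSize C t * bF C hC a t := by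
    intro a haC
    rw [sum_blocks C hC a (vNF C hC a) (hvN a haC)]
    have h1 : ∀ j ∈ Finset.range k,
        (C.getD j ∅).card * vNF C hC a j
          = (C.getD j ∅).card * ∑ t ∈ Finset.range (j + 1), bF C hC a t := by
      intro j hj
      rw [Finset.mem_range] at hj
      congr 1
      exact (partial_sums_eq (vNF C hC a) k (fun t ht => (hvmono a haC t ht).le) j hj).symm
    rw [Finset.sum_congr rfl h1, abel_sum]
    apply Finset.sum_congr rfl
    intro t _
    rw [← suffixSize_eq_sum_Ico]
  -- forward membership
  have fwd : ∀ a : I → ℕ, ((∀ i, 1 ≤ a i) ∧ levelComp a = C ∧ ∑ i, a i = m) →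
      LF C hC a ∈ (((Finset.range k).finsuppAntidiag m).filter
        (fun l => ∀ j ∈ Finset.range k, suffixSize C j ≤ l j ∧ suffixSize C j ∣ l j)) := by
    rintro a ⟨ha1, haC, ham⟩
    rw [Finset.mem_filter, Finset.mem_finsuppAntidiag]
    refine ⟨⟨?_, ?_⟩, ?_⟩
    · rw [Finset.sum_congr rfl (fun t ht => by
        rw [hLapp a t, if_pos (Finset.mem_range.mp ht)])]
      rw [← hsum a haC, ham]
    · exact Finsupp.support_onFinset_subset
    · intro j hj
      rw [Finset.mem_range] at hj
      rw [hLapp a j, if_pos hj]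
      exact ⟨Nat.le_mul_of_pos_right _ (hb1 a ha1 haC j hj), Dvd.intro _ rfl⟩
  -- backward membership
  have bwd : ∀ l : ℕ →₀ ℕ, l ∈ (((Finset.range k).finsuppAntidiag m).filter
        (fun l => ∀ j ∈ Finset.range k, suffixSize C j ≤ l j ∧ suffixSize C j ∣ l j)) →
      ((∀ i, 1 ≤ AF C hC l i) ∧ levelComp (AF C hC l) = C ∧ ∑ i, AF C hC l i = m) := by
    intro l hl
    rw [Finset.mem_filter, Finset.mem_finsuppAntidiag] at hl
    obtain ⟨⟨hsuml, hsupp⟩, hcond⟩ := hl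
    have hq1 : ∀ t < k, 1 ≤ l t / suffixSize C t := by
      intro t ht
      exact (Nat.one_le_div_iff (hs1 t ht)).mpr (hcond t (Finset.mem_range.mpr ht)).1
    have hW : ∀ i : I, AF C hC l i
        = ∑ t ∈ Finset.range ((blkF C hC i : ℕ) + 1), l t / suffixSize C t := fun i => rfl
    have hWmono : ∀ j j' : ℕ, j < j' → j' < k →
        (∑ t ∈ Finset.range (j + 1), l t / suffixSize C t)
          < ∑ t ∈ Finset.range (j' + 1), l t / suffixSize C t := by
      intro j j' hlt hk'
      exact Finset.sum_lt_sum_of_subset (f := fun t => l t / suffixSize C t)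
        (Finset.range_subset_range.mpr (by omega)) (Finset.mem_range.mpr (by omega))
        (by simp; omega) (hq1 j' hk') (fun t _ _ => Nat.zero_le _)
    refine ⟨?_, ?_, ?_⟩
    · intro i
      have h0 : (0 : ℕ) < k := lt_of_le_of_lt (Nat.zero_le _) (blkF C hC i).2
      calc 1 ≤ l 0 / suffixSize C 0 := hq1 0 h0
        _ ≤ AF C hC l i := Finset.single_le_sum (f := fun t => l t / suffixSize C t)
            (fun t _ => Nat.zero_le _) (Finset.mem_range.mpr (by omega))
    · rw [levelComp_eq_iff hC]
      constructor
      · intro j i hi i' hi'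
        rw [hW i, hW i', huniq i j hi, huniq i' j hi']
      · intro j j' hjj' i hi i' hi'
        rw [hW i, hW i', huniq i j hi, huniq i' j' hi']
        exact hWmono j j' hjj' j'.2
    · have haw : ∀ j : Fin C.length, ∀ i ∈ C.get j, AF C hC l i
          = (fun t => ∑ u ∈ Finset.range (t + 1), l u / suffixSize C u) (j : ℕ) := by
        intro j i hi
        rw [hW i, huniq i j hi]
      rw [sum_blocks C hC (AF C hC l) (fun t => ∑ u ∈ Finset.range (t + 1), l u / suffixSize C u) haw,
        abel_sum]
      have : ∀ t ∈ Finset.range k,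
          (∑ j ∈ Finset.Ico t k, (C.getD j ∅).card) * (l t / suffixSize C t) = l t := by
        intro t ht
        rw [Finset.mem_range] at ht
        rw [← suffixSize_eq_sum_Ico, Nat.mul_div_cancel' (hcond t (Finset.mem_range.mpr ht)).2]
      rw [Finset.sum_congr rfl this, hsuml]
  -- left inverse
  have linv : ∀ a : I → ℕ, ((∀ i, 1 ≤ a i) ∧ levelComp a = C ∧ ∑ i, a i = m) →
      AF C hC (LF C hC a) = a := by
    rintro a ⟨ha1, haC, ham⟩
    funext i
    rw [AF]
    have hstep : ∀ t ∈ Finset.range ((blkF C hC i : ℕ) + 1),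
        LF C hC a t / suffixSize C t = bF C hC a t := by
      intro t ht
      rw [Finset.mem_range] at ht
      have htk : t < k := by have := (blkF C hC i).2; omega
      rw [hLapp a t, if_pos htk, Nat.mul_div_cancel_left _ (hs1 t htk)]
    rw [Finset.sum_congr rfl hstep]
    exact (partial_sums_eq (vNF C hC a) k (fun t ht => (hvmono a haC t ht).le) _
      (blkF C hC i).2).trans (hvN a haC (blkF C hC i) i (hblkmem i)).symm
  -- right inverse
  have rinv : ∀ l : ℕ →₀ ℕ, l ∈ (((Finset.range k).finsuppAntidiag m).filter
        (fun l => ∀ j ∈ Finset.range k, suffixSize C j ≤ l j ∧ suffixSize C j ∣ l j)) →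
      LF C hC (AF C hC l) = l := by
    intro l hl
    rw [Finset.mem_filter, Finset.mem_finsuppAntidiag] at hl
    obtain ⟨⟨hsuml, hsupp⟩, hcond⟩ := hl
    ext t
    rw [hLapp]
    by_cases htk : t < k
    · rw [if_pos htk]
      have hvNW : ∀ u (hu : u < k), vNF C hC (AF C hC l) u
          = ∑ x ∈ Finset.range (u + 1), l x / suffixSize C x := by
        intro u hu
        rw [vNF, dif_pos hu, AF, huniq _ ⟨u, hu⟩ (hpick ⟨u, hu⟩)]
      have hbq : bF C hC (AF C hC l) t = l t / suffixSize C t := by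
        rcases Nat.eq_zero_or_pos t with rfl | htpos
        · simp [bF, hvNW 0 htk, Finset.sum_range_one]
        · obtain ⟨u, rfl⟩ : ∃ u, t = u + 1 := ⟨t - 1, by omega⟩
          rw [bF, if_neg (Nat.succ_ne_zero u), Nat.add_sub_cancel, hvNW (u + 1) htk,
            hvNW u (by omega), Finset.sum_range_succ]
          exact Nat.add_sub_cancel_left _ _
      rw [hbq, Nat.mul_div_cancel' (hcond t (Finset.mem_range.mpr htk)).2]
    · rw [if_neg htk]
      by_contra hne
      have : t ∈ l.support := Finsupp.mem_support_iff.mpr (fun h => hne h.symm)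
      exact htk (Finset.mem_range.mp (hsupp this))
  exact Nat.card_congr
    ⟨fun x => ⟨LF C hC x.1, fwd x.1 x.2⟩, fun y => ⟨AF C hC y.1, bwd y.1 y.2⟩,
     fun x => Subtype.ext (linv x.1 x.2), fun y => Subtype.ext (rinv y.1 y.2)⟩

end GenFunAux

/-- If `F_C ∈ ℤ[[X]]` has `m`-th coefficient the number of `a : I → ℕ` with all values at
least 1, level-set composition `C`, and total sum `m`, then
`F_C · ∏_j (1 − X^{s_j}) = X^{s_1 + ⋯ + s_k}`. -/
theorem genFun_levelComp {I : Type*} [Fintype I] [DecidableEq I]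
    (C : List (Finset I)) (hC : IsSetComposition C) :
    (PowerSeries.mk fun m : ℕ =>
        (Nat.card {a : I → ℕ // (∀ i, 1 ≤ a i) ∧ levelComp a = C ∧ ∑ i, a i = m} : ℤ)) *
      ∏ j ∈ Finset.range C.length, (1 - (PowerSeries.X : PowerSeries ℤ) ^ suffixSize C j) =
    (PowerSeries.X : PowerSeries ℤ) ^ ∑ j ∈ Finset.range C.length, suffixSize C j := by
  classical
  have hs1 : ∀ t < C.length, 1 ≤ suffixSize C t := by
    intro t ht
    rw [GenFunAux.suffixSize_eq_sum_Ico]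
    have hc1 : 1 ≤ (C.getD t ∅).card := by
      rw [List.getD_eq_getElem _ _ ht]
      exact Finset.card_pos.mpr (hC.1 _ (List.getElem_mem _))
    exact le_trans hc1
      (Finset.single_le_sum (f := fun j => (C.getD j ∅).card) (fun i _ => Nat.zero_le _)
        (Finset.mem_Ico.mpr ⟨le_refl t, ht⟩))
  have hmk : (PowerSeries.mk fun m : ℕ =>
        (Nat.card {a : I → ℕ // (∀ i, 1 ≤ a i) ∧ levelComp a = C ∧ ∑ i, a i = m} : ℤ))
      = ∏ j ∈ Finset.range C.length,
          (PowerSeries.X ^ suffixSize C j * GenFunAux.Dser (suffixSize C j)) := by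
    ext m
    rw [PowerSeries.coeff_mk, PowerSeries.coeff_prod]
    have h1 : ∀ l ∈ (Finset.range C.length).finsuppAntidiag m,
        (∏ j ∈ Finset.range C.length,
            PowerSeries.coeff (l j)
              (PowerSeries.X ^ suffixSize C j * GenFunAux.Dser (suffixSize C j)))
          = if (∀ j ∈ Finset.range C.length, suffixSize C j ≤ l j ∧ suffixSize C j ∣ l j)
              then (1 : ℤ) else 0 := by
      intro l _
      rw [Finset.prod_congr rfl (fun j _ => GenFunAux.coeff_X_pow_mul_Dser _ _),
        Finset.prod_boole]
    rw [Finset.sum_congr rfl h1, Finset.sum_boole, GenFunAux.count_eq C hC m]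
  rw [hmk, ← Finset.prod_mul_distrib]
  have h2 : ∀ j ∈ Finset.range C.length,
      PowerSeries.X ^ suffixSize C j * GenFunAux.Dser (suffixSize C j) *
          (1 - (PowerSeries.X : PowerSeries ℤ) ^ suffixSize C j)
        = (PowerSeries.X : PowerSeries ℤ) ^ suffixSize C j := by
    intro j hj
    rw [mul_assoc, mul_comm (GenFunAux.Dser _),
      GenFunAux.one_sub_X_pow_mul_Dser (hs1 j (Finset.mem_range.mp hj)), mul_one]
  rw [Finset.prod_congr rfl h2, Finset.prod_pow_eq_pow_sum]
end

section
/- Let G be a simple graph on a finite vertex set V and let n ∈ ℕ. Then the number of proper colorings f : V → Fin n equals the sum, over all set compositions C of V in which every block is an independent set of G, of the binomial coefficient choose(n, ℓ(C)). -/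
section Aux

variable {V : Type*} [Fintype V] [DecidableEq V] {n : ℕ}

private lemma mem_foldr_union_s2 {l : List (Finset V)} {a : V} :
    a ∈ l.foldr (· ∪ ·) ∅ ↔ ∃ B ∈ l, a ∈ B := by
  induction l with
  | nil => simp
  | cons B t ih => simp [ih]

/-- The list of color classes of `f`, in increasing order of the colors used. -/
private def blocksOf (f : V → Fin n) : List (Finset V) :=
  ((Finset.univ.image f).sort (· ≤ ·)).map fun c => Finset.univ.filter fun v => f v = c

private lemma getElem_list_congr {α : Type*} {l l' : List α} (h : l = l') {i : ℕ}
    (hi : i < l.length) : l[i]'hi = l'[i]'(h ▸ hi) := by subst h; rfl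

private lemma getElem_idx_congr {α : Type*} (l : List α) {i j : ℕ} (h : i = j)
    (hi : i < l.length) : l[i]'hi = l[j]'(h ▸ hi) := by subst h; rfl

private lemma length_blocksOf (f : V → Fin n) :
    (blocksOf f).length = (Finset.univ.image f).card := by
  rw [blocksOf, List.length_map, Finset.length_sort]

private lemma blocksOf_getElem (f : V → Fin n) {i : ℕ} (hi : i < (blocksOf f).length) :
    (blocksOf f)[i] = Finset.univ.filter (fun v => f v =
      ((Finset.univ.image f).sort (· ≤ ·))[i]'
        (by rw [Finset.length_sort, ← length_blocksOf f]; exact hi)) :=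
  List.getElem_map _

private lemma findIdx_eq_of_mem {l : List (Finset V)} (hd : l.Pairwise Disjoint)
    {j : ℕ} (hj : j < l.length) {v : V} (hv : v ∈ l[j]) :
    l.findIdx (fun B => decide (v ∈ B)) = j := by
  set p : Finset V → Bool := fun B => decide (v ∈ B) with hp
  have hex : ∃ B ∈ l, p B := ⟨l[j], List.getElem_mem hj, by simp [hp, hv]⟩
  have hlt : l.findIdx p < l.length := List.findIdx_lt_length_of_exists hex
  have hmem : v ∈ l[l.findIdx p] := by
    have := List.findIdx_getElem (w := hlt) (p := p)
    simpa [hp] using this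
  rcases lt_trichotomy (l.findIdx p) j with h | h | h
  · have hdisj : Disjoint l[l.findIdx p] l[j] :=
      (List.pairwise_iff_getElem.mp hd) _ _ hlt hj h
    exact absurd hv (Finset.disjoint_left.mp hdisj hmem)
  · exact h
  · have hfalse := List.not_of_lt_findIdx (p := p) (xs := l) h
    simp only [hp, decide_eq_false_iff_not] at hfalse
    exact absurd hv (by convert hfalse using 3)

/-- Reassign colors to the blocks of `L` using the color list `cs`. -/
private def recolor (L : List (Finset V)) (cs : List (Fin n)) (h : L.length ≤ cs.length)
    (hcov : L.foldr (· ∪ ·) ∅ = Finset.univ) (v : V) : Fin n :=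
  cs.get ⟨L.findIdx (fun B => decide (v ∈ B)), by
    refine lt_of_lt_of_le (List.findIdx_lt_length_of_exists ?_) h
    obtain ⟨B, hB, hvB⟩ := mem_foldr_union_s2.mp (hcov ▸ Finset.mem_univ v)
    exact ⟨B, hB, by simp [hvB]⟩⟩

private lemma lists_eq_of_getD {N : ℕ} {L M : List (Finset V)}
    (hL : ∀ B ∈ L, B.Nonempty) (hM : ∀ B ∈ M, B.Nonempty)
    (hLn : L.length ≤ N) (hMn : M.length ≤ N)
    (h : ∀ i : Fin (N + 1), L.getD i ∅ = M.getD i ∅) : L = M := by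
  have hlen : L.length = M.length := by
    by_contra hne
    rcases Nat.lt_or_ge L.length M.length with hlt | hge
    · have h1 : L.getD L.length ∅ = ∅ := List.getD_eq_default _ _ le_rfl
      have h2 : M.getD L.length ∅ = M[L.length] := List.getD_eq_getElem _ _ hlt
      have := h ⟨L.length, Nat.lt_succ_of_le hLn⟩
      simp only at this
      rw [h1, h2] at this
      exact absurd this.symm (hM _ (List.getElem_mem hlt)).ne_empty
    · have hlt : M.length < L.length := lt_of_le_of_ne hge (fun e => hne e.symm)
      have h1 : M.getD M.length ∅ = ∅ := List.getD_eq_default _ _ le_rfl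
      have h2 : L.getD M.length ∅ = L[M.length] := List.getD_eq_getElem _ _ hlt
      have := h ⟨M.length, Nat.lt_succ_of_le hMn⟩
      simp only at this
      rw [h1, h2] at this
      exact absurd this (hL _ (List.getElem_mem hlt)).ne_empty
  refine List.ext_getElem hlen fun i hi hi' => ?_
  have := h ⟨i, lt_of_lt_of_le hi (Nat.le_succ_of_le hLn)⟩
  simp only at this
  rwa [List.getD_eq_getElem _ _ hi, List.getD_eq_getElem _ _ hi'] at this

private lemma finite_comps (P : List (Finset V) → Prop) :
    Finite {C : List (Finset V) // IsSetComposition C ∧ P C} := by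
  set N := Fintype.card (Finset V) with hN
  refine Finite.of_injective
    (fun C : {C : List (Finset V) // IsSetComposition C ∧ P C} =>
      (fun i : Fin (N + 1) => C.1.getD i ∅)) ?_
  have hlen : ∀ C : {C : List (Finset V) // IsSetComposition C ∧ P C}, C.1.length ≤ N := by
    intro C
    obtain ⟨⟨hne, hdisj, -⟩, -⟩ := C.2
    have hnd : C.1.Nodup := by
      refine hdisj.imp_of_mem ?_
      intro a b ha hb hab
      intro he
      subst he
      exact (hne a ha).ne_empty (by simpa using disjoint_self.mp hab)
    exact hnd.length_le_card
  intro C D h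
  refine Subtype.ext (lists_eq_of_getD (fun B hB => C.2.1.1 B hB) (fun B hB => D.2.1.1 B hB)
    (hlen C) (hlen D) fun i => ?_)
  exact congrFun h i

end Aux

/-- The number of proper colorings `f : V → Fin n` of a simple graph `G` equals the sum,
over all set compositions `C` of `V` whose blocks are independent sets of `G`, of
`choose n (length C)`. -/
theorem count_properColorings_eq_sum_over_compositions
    {V : Type*} [Fintype V] [DecidableEq V] (G : SimpleGraph V) [DecidableRel G.Adj] (n : ℕ) :
    (Finset.univ.filter fun f : V → Fin n => ∀ u v, G.Adj u v → f u ≠ f v).card =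
      ∑ᶠ C : {C : List (Finset V) // IsSetComposition C ∧
          ∀ B ∈ C, ∀ u ∈ B, ∀ v ∈ B, ¬ G.Adj u v},
        n.choose C.1.length := by
  classical
  set T := {C : List (Finset V) // IsSetComposition C ∧
      ∀ B ∈ C, ∀ u ∈ B, ∀ v ∈ B, ¬ G.Adj u v} with hT
  have : Finite T := finite_comps _
  have : Fintype T := Fintype.ofFinite T
  set S : Finset (V → Fin n) :=
    Finset.univ.filter fun f : V → Fin n => ∀ u v, G.Adj u v → f u ≠ f v with hS
  -- blocksOf f is a valid composition for proper f
  have hblocks : ∀ f ∈ S, IsSetComposition (blocksOf f) ∧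
      ∀ B ∈ blocksOf f, ∀ u ∈ B, ∀ v ∈ B, ¬ G.Adj u v := by
    intro f hf
    rw [hS, Finset.mem_filter] at hf
    have hproper := hf.2
    refine ⟨⟨?_, ?_, ?_⟩, ?_⟩
    · intro B hB
      rw [blocksOf, List.mem_map] at hB
      obtain ⟨c, hc, rfl⟩ := hB
      rw [Finset.mem_sort, Finset.mem_image] at hc
      obtain ⟨v, -, rfl⟩ := hc
      exact ⟨v, by simp⟩
    · rw [blocksOf]
      refine List.Pairwise.map _ ?_ ((Finset.univ.image f).sort_nodup (· ≤ ·))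
      intro c c' hcc
      rw [Finset.disjoint_left]
      intro v hv hv'
      simp only [Finset.mem_filter] at hv hv'
      exact hcc (hv.2 ▸ hv'.2)
    · refine Finset.eq_univ_of_forall fun v => ?_
      rw [mem_foldr_union_s2]
      refine ⟨Finset.univ.filter fun w => f w = f v, ?_, by simp⟩
      rw [blocksOf, List.mem_map]
      exact ⟨f v, by simp [Finset.mem_sort], rfl⟩
    · intro B hB u hu w hw hadj
      rw [blocksOf, List.mem_map] at hB
      obtain ⟨c, -, rfl⟩ := hB
      simp only [Finset.mem_filter] at hu hw
      exact hproper u w hadj (hu.2.trans hw.2.symm)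
  rw [finsum_eq_sum_of_fintype]
  rw [Finset.card_eq_sum_card_fiberwise (f := blocksOf)
      (t := Finset.univ.image fun C : T => C.1)
      (fun f hf => Finset.mem_image.mpr ⟨⟨blocksOf f, hblocks f hf⟩, Finset.mem_univ _, rfl⟩)]
  rw [Finset.sum_image (fun C _ D _ h => Subtype.ext h)]
  refine Finset.sum_congr rfl fun C _ => ?_
  -- fiber count
  obtain ⟨⟨hne, hdisj, hcov⟩, hind⟩ := C.2
  set L := C.1 with hL
  set k := L.length with hk
  have hchoose : n.choose k = ((Finset.univ : Finset (Fin n)).powersetCard k).card := by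
    rw [Finset.card_powersetCard, Finset.card_univ, Fintype.card_fin]
  have hfind_lt : ∀ v : V, L.findIdx (fun B => decide (v ∈ B)) < L.length := by
    intro v
    refine List.findIdx_lt_length_of_exists ?_
    obtain ⟨B, hB, hvB⟩ := mem_foldr_union_s2.mp (hcov ▸ Finset.mem_univ v)
    exact ⟨B, hB, by simp [hvB]⟩
  have hfind_mem : ∀ v : V, v ∈ L[L.findIdx (fun B => decide (v ∈ B))]'(hfind_lt v) := by
    intro v
    have := List.findIdx_getElem (w := hfind_lt v) (p := fun B => decide (v ∈ B))
    simpa using this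
  have himage : ∀ (s : Finset (Fin n)), s.card = k →
      ∀ (hlen : L.length ≤ (s.sort (· ≤ ·)).length),
      Finset.univ.image (recolor L (s.sort (· ≤ ·)) hlen hcov) = s := by
    intro s hcard hlen
    refine Finset.Subset.antisymm ?_ ?_
    · intro c hc
      rw [Finset.mem_image] at hc
      obtain ⟨v, -, rfl⟩ := hc
      rw [← Finset.mem_sort (· ≤ ·)]
      simp only [recolor, List.get_eq_getElem]
      exact List.getElem_mem _
    · intro c hc
      have hc' : c ∈ s.sort (· ≤ ·) := (Finset.mem_sort _).mpr hc
      obtain ⟨j, hj, rfl⟩ := List.getElem_of_mem hc'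
      have hjL : j < L.length := by
        rw [Finset.length_sort, hcard] at hj
        exact hj
      obtain ⟨v, hv⟩ := hne L[j] (List.getElem_mem hjL)
      rw [Finset.mem_image]
      refine ⟨v, Finset.mem_univ v, ?_⟩
      have hidx := findIdx_eq_of_mem hdisj hjL hv
      simp only [recolor, List.get_eq_getElem]
      simp only [hidx]
  have hfiber : ∀ (s : Finset (Fin n)), s.card = k →
      ∀ (hlen : L.length ≤ (s.sort (· ≤ ·)).length),
      recolor L (s.sort (· ≤ ·)) hlen hcov ∈ S.filter (fun f => blocksOf f = L) := by
    intro s hcard hlen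
    set cs := s.sort (· ≤ ·) with hcs
    set g : V → Fin n := recolor L cs hlen hcov with hg
    have hgv : ∀ v : V, g v = cs[L.findIdx (fun B => decide (v ∈ B))]'
        (lt_of_lt_of_le (hfind_lt v) hlen) := fun v => by
      simp [hg, recolor]
    have hproper : ∀ u v, G.Adj u v → g u ≠ g v := by
      intro u v hadj heq
      rw [hgv u, hgv v] at heq
      have hidx : L.findIdx (fun B => decide (u ∈ B)) = L.findIdx (fun B => decide (v ∈ B)) :=
        ((s.sort_nodup (· ≤ ·)).getElem_inj_iff).mp heq
      have hu := hfind_mem u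
      rw [getElem_idx_congr L hidx (hfind_lt u)] at hu
      exact hind _ (List.getElem_mem _) u hu v (hfind_mem v) hadj
    rw [Finset.mem_filter]
    refine ⟨by rw [hS, Finset.mem_filter]; exact ⟨Finset.mem_univ _, hproper⟩, ?_⟩
    have himg : Finset.univ.image g = s := himage s hcard hlen
    have hbg : blocksOf g = cs.map (fun c => Finset.univ.filter fun v => g v = c) := by
      rw [blocksOf, himg]
    rw [hbg]
    refine List.ext_getElem (by rw [List.length_map, hcs, Finset.length_sort, hcard, hk]) ?_
    intro t ht ht'
    have htc : t < cs.length := by rwa [List.length_map] at ht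
    rw [List.getElem_map]
    ext v
    simp only [Finset.mem_filter, Finset.mem_univ, true_and]
    rw [hgv v]
    constructor
    · intro h
      have hivt : L.findIdx (fun B => decide (v ∈ B)) = t :=
        ((s.sort_nodup (· ≤ ·)).getElem_inj_iff).mp h
      have hm := hfind_mem v
      rwa [getElem_idx_congr L hivt (hfind_lt v)] at hm
    · intro hv
      exact getElem_idx_congr cs (findIdx_eq_of_mem hdisj ht' hv) _
  rw [hchoose]
  refine Finset.card_bij' (fun f _ => Finset.univ.image f)
    (fun s hs => recolor L ((s.sort (· ≤ ·))) ?_ hcov) ?_ ?_ ?_ ?_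
  · -- length bound for recolor
    rw [Finset.length_sort]
    rw [Finset.mem_powersetCard] at hs
    exact le_of_eq hs.2.symm
  · -- i maps into powersetCard
    intro f hf
    rw [Finset.mem_filter] at hf
    have hbf : blocksOf f = L := hf.2
    rw [Finset.mem_powersetCard]
    refine ⟨Finset.subset_univ _, ?_⟩
    have : (blocksOf f).length = k := by rw [hbf]
    rwa [blocksOf, List.length_map, Finset.length_sort] at this
  · -- j maps into fiber
    intro s hs
    exact hfiber s (Finset.mem_powersetCard.mp hs).2 _
  · -- left inverse : recolor of image f = f
    intro f hf
    rw [Finset.mem_filter] at hf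
    have hbf : blocksOf f = L := hf.2
    funext v
    simp only [recolor, List.get_eq_getElem]
    have hlt := hfind_lt v
    have hvm := hfind_mem v
    rw [getElem_list_congr hbf.symm hlt] at hvm
    rw [blocksOf_getElem] at hvm
    rw [Finset.mem_filter] at hvm
    exact hvm.2.symm
  · -- right inverse : image of recolor = s
    intro s hs
    exact himage s (Finset.mem_powersetCard.mp hs).2 _
end

section
/- Let G and H be simple graphs on disjoint finite vertex sets V and W, and let G ⊕ H denote their disjoint union, the simple graph on V ⊕ W in which two vertices are adjacent iff they both lie in V and are adjacent in G, or both lie in W and are adjacent in H. Then for every commutative ring R, q ∈ R, and n ∈ ℕ, P_{G⊕H}(q, n) = P_G(q, n) · P_H(q, n). -/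
open scoped Classical in
/-- The `q`-chromatic polynomial `P_G(q, n) = Σ_{proper colorings f : V → Fin n} q^{w(f)}`,
where `w(f) = Σ_{v ∈ V} f(v)` (values in `Fin n` viewed as natural numbers). -/
noncomputable def qChromatic {V : Type*} [Fintype V] [DecidableEq V] (G : SimpleGraph V)
    {R : Type*} [CommRing R] (q : R) (n : ℕ) : R :=
  ∑ f ∈ Finset.univ.filter (fun f : V → Fin n => ∀ u v, G.Adj u v → f u ≠ f v),
    q ^ ∑ v, (f v : ℕ)

/-- `P_{G ⊕ H}(q, n) = P_G(q, n) · P_H(q, n)` for the disjoint union of simple graphs. -/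
theorem qChromatic_sum_graph {V W : Type*} [Fintype V] [DecidableEq V] [Fintype W]
    [DecidableEq W] (G : SimpleGraph V) (H : SimpleGraph W)
    {R : Type*} [CommRing R] (q : R) (n : ℕ) :
    qChromatic (G ⊕g H) q n = qChromatic G q n * qChromatic H q n := by
  classical
  unfold qChromatic
  rw [Finset.sum_mul_sum, ← Finset.sum_product']
  refine Finset.sum_nbij' (fun (f : V ⊕ W → Fin n) => (f ∘ Sum.inl, f ∘ Sum.inr))
    (fun (p : (V → Fin n) × (W → Fin n)) => Sum.elim p.1 p.2) ?_ ?_ ?_ ?_ ?_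
  · intro f hf
    simp only [Finset.mem_filter, Finset.mem_univ, true_and] at hf
    simp only [Finset.mem_product, Finset.mem_filter, Finset.mem_univ, true_and]
    exact ⟨fun u v h => hf (Sum.inl u) (Sum.inl v) (by simpa),
      fun u v h => hf (Sum.inr u) (Sum.inr v) (by simpa)⟩
  · intro p hp
    simp only [Finset.mem_product, Finset.mem_filter, Finset.mem_univ, true_and] at hp
    obtain ⟨h1, h2⟩ := hp
    simp only [Finset.mem_filter, Finset.mem_univ, true_and]
    rintro (u | u) (v | v) h <;> simp_all [SimpleGraph.sum_adj]
  · intro f hf; funext x; cases x <;> rfl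
  · intro p hp; rfl
  · intro f hf
    rw [Fintype.sum_sum_type, pow_add]; rfl
end

section
/- Let G be a simple graph on a finite vertex set V, let R be a commutative ring, q ∈ R, and m, n ∈ ℕ. Then P_G(q, m+n) = Σ_{S ⊆ V} q^{m·|V∖S|} · P_{G[S]}(q, m) · P_{G[V∖S]}(q, n), where G[S] denotes the induced subgraph of G on S. -/
/-- `P_G(q, m+n) = Σ_{S ⊆ V} q^{m·|V∖S|} · P_{G[S]}(q, m) · P_{G[V∖S]}(q, n)`. -/
theorem qChromatic_add {V : Type*} [Fintype V] [DecidableEq V] (G : SimpleGraph V)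
    {R : Type*} [CommRing R] (q : R) (m n : ℕ) :
    qChromatic G q (m + n) =
      ∑ S : Finset V, q ^ (m * Sᶜ.card) *
        qChromatic (G.induce (S : Set V)) q m *
        qChromatic (G.induce ((Sᶜ : Finset V) : Set V)) q n := by
  classical
  unfold qChromatic
  rw [← Finset.sum_fiberwise (Finset.univ.filter
      (fun f : V → Fin (m+n) => ∀ u v, G.Adj u v → f u ≠ f v))
      (fun f => Finset.univ.filter fun v => (f v : ℕ) < m)]
  refine Finset.sum_congr rfl fun S _ => ?_
  rw [mul_assoc, Finset.sum_mul_sum, Finset.mul_sum]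
  simp_rw [Finset.mul_sum, ← pow_add, ← Finset.sum_product']
  refine Finset.sum_bij'
    (i := fun f hf => (fun v : (S : Set V) =>
        (⟨(f v.1 : ℕ), by
          simp only [Finset.mem_filter, Finset.mem_univ, true_and] at hf
          have hv' : (v : V) ∈ Finset.filter (fun w => (f w : ℕ) < m) Finset.univ := by
            rw [hf.2]; exact Finset.mem_coe.mp v.2
          simpa using hv'⟩ : Fin m),
      fun v : ((Sᶜ : Finset V) : Set V) =>
        (⟨(f v.1 : ℕ) - m, by
          simp only [Finset.mem_filter, Finset.mem_univ, true_and] at hf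
          have hv' : (v : V) ∉ Finset.filter (fun w => (f w : ℕ) < m) Finset.univ := by
            rw [hf.2]
            have := v.2
            simp only [Finset.coe_compl, Set.mem_compl_iff, Finset.mem_coe] at this
            simpa using this
          simp only [Finset.mem_filter, Finset.mem_univ, true_and, not_lt] at hv'
          have := (f v.1).2
          omega⟩ : Fin n)))
    (j := fun p hp => fun v => if hv : v ∈ S then
        (⟨(p.1 ⟨v, Finset.mem_coe.mpr hv⟩ : ℕ), by
            have := (p.1 ⟨v, Finset.mem_coe.mpr hv⟩).2; omega⟩ : Fin (m+n))
      else
        (⟨m + (p.2 ⟨v, by simp [hv]⟩ : ℕ), by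
            have := (p.2 ⟨v, by simp [hv]⟩).2; omega⟩ : Fin (m+n)))
    ?_ ?_ ?_ ?_ ?_
  · -- i maps into the product set
    intro f hf
    simp only [Finset.mem_filter, Finset.mem_univ, true_and] at hf
    simp only [Finset.mem_product, Finset.mem_filter, Finset.mem_univ, true_and]
    constructor
    · intro u v huv h
      exact hf.1 u.1 v.1 (by simpa using huv) (Fin.ext (by simpa using congrArg Fin.val h))
    · intro u v huv h
      have hu : ¬ (f u.1 : ℕ) < m := by
        have := u.2
        simpa [← hf.2, -not_lt] using this
      have hv : ¬ (f v.1 : ℕ) < m := by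
        have := v.2
        simpa [← hf.2, -not_lt] using this
      have h' : (f u.1 : ℕ) - m = (f v.1 : ℕ) - m := congrArg Fin.val h
      exact hf.1 u.1 v.1 (by simpa using huv) (Fin.ext (by omega))
  · -- j maps into the fiber
    intro p hp
    simp only [Finset.mem_product, Finset.mem_filter, Finset.mem_univ, true_and] at hp
    simp only [Finset.mem_filter, Finset.mem_univ, true_and]
    constructor
    · intro u v huv h
      by_cases hu : u ∈ S <;> by_cases hv : v ∈ S <;>
        simp only [hu, hv, dif_pos, dif_neg, not_false_iff] at h
      · exact hp.1 ⟨u, Finset.mem_coe.mpr hu⟩ ⟨v, Finset.mem_coe.mpr hv⟩ (by simpa using huv)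
          (Fin.ext (by simpa using congrArg Fin.val h))
      · have := congrArg Fin.val h
        simp only [Fin.val_mk] at this
        have := (p.1 ⟨u, Finset.mem_coe.mpr hu⟩).2
        omega
      · have := congrArg Fin.val h
        simp only [Fin.val_mk] at this
        have := (p.1 ⟨v, Finset.mem_coe.mpr hv⟩).2
        omega
      · exact hp.2 ⟨u, by simp [hu]⟩ ⟨v, by simp [hv]⟩ (by simpa using huv)
          (Fin.ext (by simpa using congrArg Fin.val h))
    · ext v
      simp only [Finset.mem_filter, Finset.mem_univ, true_and]
      by_cases hv : v ∈ S
      · simp only [hv, dif_pos, iff_true]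
        exact (p.1 ⟨v, Finset.mem_coe.mpr hv⟩).2
      · simp only [hv, dif_neg, not_false_iff, iff_false]
        simp
  · -- left inverse
    intro f hf
    simp only [Finset.mem_filter, Finset.mem_univ, true_and] at hf
    funext v
    by_cases hv : v ∈ S
    · simp only [hv, dif_pos]
    · simp only [hv, dif_neg, not_false_iff]
      have : ¬ (f v : ℕ) < m := by
        have := hv
        rw [← hf.2] at this
        simpa using this
      exact Fin.ext (by simp; omega)
  · -- right inverse
    intro p hp
    refine Prod.ext (funext fun v => ?_) (funext fun v => ?_)
    · have hv : v.1 ∈ S := Finset.mem_coe.mp v.2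
      apply Fin.ext
      simp [hv]
    · have hv : v.1 ∉ S := by
        have := v.2
        simpa using this
      apply Fin.ext
      simp [hv]
  · -- weights agree
    intro f hf
    simp only [Finset.mem_filter, Finset.mem_univ, true_and] at hf
    congr 1
    have hge : ∀ v ∈ Sᶜ, m ≤ (f v : ℕ) := by
      intro v hv
      rw [Finset.mem_compl, ← hf.2] at hv
      simpa using hv
    have h1 : ∑ v : (S : Set V), (f v.1 : ℕ) = ∑ v ∈ S, (f v : ℕ) := by
      rw [← Finset.sum_subtype S (fun x => Finset.mem_coe.symm) (fun v => (f v : ℕ))]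
    have h2 : ∑ v : ((Sᶜ : Finset V) : Set V), ((f v.1 : ℕ) - m) =
        ∑ v ∈ Sᶜ, ((f v : ℕ) - m) := by
      rw [← Finset.sum_subtype (Sᶜ) (fun x => Finset.mem_coe.symm) (fun v => (f v : ℕ) - m)]
    rw [← Finset.sum_add_sum_compl S (fun v => (f v : ℕ))]
    simp only [h1, h2]
    have h3 : ∑ v ∈ Sᶜ, (f v : ℕ) = m * Sᶜ.card + ∑ v ∈ Sᶜ, ((f v : ℕ) - m) := by
      have : ∑ v ∈ Sᶜ, (f v : ℕ) = ∑ v ∈ Sᶜ, (m + ((f v : ℕ) - m)) :=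
        Finset.sum_congr rfl fun v hv => by have := hge v hv; omega
      rw [this, Finset.sum_add_distrib, Finset.sum_const, smul_eq_mul, mul_comm]
    rw [h3]
    ring
end

section
/- Let P be a partial order on a finite set I, let R be a commutative ring, q ∈ R, and m, n ∈ ℕ. Then Ω_P(q, m+n) = Σ_S q^{m·|I∖S|} · Ω_{P[S]}(q, m) · Ω_{P[I∖S]}(q, n), where the sum is over all lower sets S of P (subsets S ⊆ I such that i ≤ j and j ∈ S imply i ∈ S), and P[S], P[I∖S] denote the induced partial orders. -/
open scoped Classical in
/-- The `q`-analogue of the strict order polynomial: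
`Ω_P(q, n) = Σ_{strictly order-preserving f : I → Fin n} q^{w(f)}`, where
`w(f) = Σ_{i ∈ I} f(i)` (values in `Fin n` viewed as natural numbers). -/
noncomputable def qOrderPoly (I : Type*) [Fintype I] [DecidableEq I] [PartialOrder I]
    {R : Type*} [CommRing R] (q : R) (n : ℕ) : R :=
  ∑ f ∈ Finset.univ.filter (fun f : I → Fin n => ∀ i j : I, i < j → f i < f j),
    q ^ ∑ i, (f i : ℕ)

open scoped Classical in
/-- `Ω_P(q, m+n) = Σ_{S a lower set of P} q^{m·|I∖S|} · Ω_{P[S]}(q, m) · Ω_{P[I∖S]}(q, n)`,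
where the sum is over all lower sets `S` of `P` and `P[S]`, `P[I∖S]` are the induced
partial orders. -/
theorem qOrderPoly_add {I : Type*} [Fintype I] [DecidableEq I] [PartialOrder I]
    {R : Type*} [CommRing R] (q : R) (m n : ℕ) :
    qOrderPoly I q (m + n) =
      ∑ S ∈ Finset.univ.filter (fun S : Finset I => IsLowerSet (S : Set I)),
        q ^ (m * Sᶜ.card) *
          qOrderPoly {i : I // i ∈ S} q m *
          qOrderPoly {i : I // i ∈ Sᶜ} q n := by
  classical
  rw [qOrderPoly]
  rw [← Finset.sum_fiberwise_of_maps_to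
    (t := (Finset.univ : Finset (Finset I)))
    (g := fun f : I → Fin (m+n) => Finset.univ.filter (fun i => (f i : ℕ) < m))
    (fun f _ => Finset.mem_univ _)]
  rw [← Finset.sum_filter_add_sum_filter_not Finset.univ
    (fun S : Finset I => IsLowerSet (S : Set I))]
  have hzero : ∑ S ∈ Finset.univ.filter
      (fun S : Finset I => ¬ IsLowerSet (S : Set I)),
      ∑ f ∈ (Finset.univ.filter (fun f : I → Fin (m+n) => ∀ i j : I, i < j → f i < f j)).filter
        (fun f => Finset.univ.filter (fun i => (f i : ℕ) < m) = S),
      q ^ ∑ i, (f i : ℕ) = 0 := by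
    refine Finset.sum_eq_zero fun S hS => ?_
    rw [Finset.mem_filter] at hS
    refine Finset.sum_eq_zero fun f hf => ?_
    exfalso
    rw [Finset.mem_filter, Finset.mem_filter] at hf
    apply hS.2
    rw [← hf.2]
    intro a b hab ha
    simp only [Finset.coe_filter, Set.mem_setOf_eq, Finset.mem_univ, true_and] at ha ⊢
    rcases eq_or_lt_of_le hab with rfl | hab
    · exact ha
    · exact lt_trans (by exact_mod_cast hf.1.2 b a hab) ha
  rw [hzero, add_zero]
  refine Finset.sum_congr rfl fun S hS => ?_
  rw [Finset.mem_filter] at hS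
  have hlow := hS.2
  rw [qOrderPoly, qOrderPoly, mul_assoc, Finset.sum_mul_sum, Finset.mul_sum]
  simp only [Finset.mul_sum]
  rw [← Finset.sum_product']
  have key : ∀ f : I → Fin (m+n),
      f ∈ (Finset.univ.filter (fun f : I → Fin (m+n) => ∀ i j : I, i < j → f i < f j)).filter
        (fun f => Finset.univ.filter (fun i => (f i : ℕ) < m) = S) →
      ∀ i : I, (f i : ℕ) < m ↔ i ∈ S := by
    intro f hf i
    rw [Finset.mem_filter] at hf
    rw [← hf.2, Finset.mem_filter]
    simp
  refine Finset.sum_bij'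
    (fun f hf => (fun i : {x // x ∈ S} => (⟨(f i.1 : ℕ), (key f hf i.1).mpr i.2⟩ : Fin m),
               fun i : {x // x ∈ Sᶜ} => (⟨(f i.1 : ℕ) - m, by
                 have h1 : ¬ ((f i.1 : ℕ) < m) := fun h => (Finset.mem_compl.mp i.2) ((key f hf i.1).mp h)
                 have h2 := (f i.1).isLt
                 omega⟩ : Fin n)))
    (fun p _ => fun i : I => if hi : i ∈ S then (⟨(p.1 ⟨i, hi⟩ : ℕ),
        lt_of_lt_of_le (p.1 ⟨i, hi⟩).isLt (Nat.le_add_right m n)⟩ : Fin (m+n))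
      else ⟨m + (p.2 ⟨i, Finset.mem_compl.mpr hi⟩ : ℕ),
        Nat.add_lt_add_left (p.2 ⟨i, Finset.mem_compl.mpr hi⟩).isLt m⟩)
    ?_ ?_ ?_ ?_ ?_
  · -- forward lands in product
    intro f hf
    rw [Finset.mem_product]
    constructor
    · simp only [Finset.mem_filter, Finset.mem_univ, true_and]
      intro a b hab
      have hst := (Finset.mem_filter.mp (Finset.mem_filter.mp hf).1).2
      have h1 : f a.1 < f b.1 := hst a.1 b.1 (by exact_mod_cast hab)
      simp only [Fin.lt_def] at h1 ⊢
      exact h1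
    · simp only [Finset.mem_filter, Finset.mem_univ, true_and]
      intro a b hab
      have hst := (Finset.mem_filter.mp (Finset.mem_filter.mp hf).1).2
      have h1 : f a.1 < f b.1 := hst a.1 b.1 (by exact_mod_cast hab)
      have h2 : ¬ ((f a.1 : ℕ) < m) := fun h => (Finset.mem_compl.mp a.2) ((key f hf a.1).mp h)
      simp only [Fin.lt_def] at h1 ⊢
      omega
  · -- backward lands in s
    intro p hp
    rw [Finset.mem_product] at hp
    have hg := (Finset.mem_filter.mp hp.1).2
    have hh := (Finset.mem_filter.mp hp.2).2
    rw [Finset.mem_filter, Finset.mem_filter]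
    refine ⟨⟨Finset.mem_univ _, ?_⟩, ?_⟩
    · intro a b hab
      by_cases ha : a ∈ S <;> by_cases hb : b ∈ S
      · have h1 := hg ⟨a, ha⟩ ⟨b, hb⟩ (by exact_mod_cast hab)
        simp only [dif_pos ha, dif_pos hb, Fin.lt_def] at h1 ⊢
        exact_mod_cast h1
      · simp only [dif_pos ha, dif_neg hb, Fin.lt_def]
        exact lt_of_lt_of_le (p.1 ⟨a, ha⟩).isLt (Nat.le_add_right _ _)
      · exact absurd (hlow hab.le hb) ha
      · have h1 := hh ⟨a, Finset.mem_compl.mpr ha⟩ ⟨b, Finset.mem_compl.mpr hb⟩ (by exact_mod_cast hab)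
        simp only [dif_neg ha, dif_neg hb, Fin.lt_def] at h1 ⊢
        omega
    · ext i
      simp only [Finset.mem_filter, Finset.mem_univ, true_and]
      by_cases hi : i ∈ S
      · simp [dif_pos hi, hi, (p.1 ⟨i, hi⟩).isLt]
      · simp [dif_neg hi, hi]
  · -- left inverse
    intro f hf
    funext i
    by_cases hi : i ∈ S
    · simp [dif_pos hi]
    · have h1 : ¬ ((f i : ℕ) < m) := fun h => hi ((key f hf i).mp h)
      simp only [dif_neg hi]
      apply Fin.ext
      simp
      omega
  · -- right inverse
    intro p hp
    refine Prod.ext ?_ ?_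
    · funext i
      apply Fin.ext
      simp [dif_pos i.2]
    · funext i
      have hi : i.1 ∉ S := Finset.mem_compl.mp i.2
      apply Fin.ext
      simp [dif_neg hi]
  · -- weights
    intro f hf
    rw [← pow_add, ← pow_add]
    congr 1
    rw [← Finset.sum_add_sum_compl S (fun i => (f i : ℕ))]
    rw [← Finset.sum_coe_sort S (fun i => ((f i : ℕ) : ℕ)),
        ← Finset.sum_coe_sort Sᶜ (fun i => ((f i : ℕ) : ℕ))]
    have hge : ∀ i : {x // x ∈ Sᶜ}, m ≤ (f i.1 : ℕ) := fun i =>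
      le_of_not_gt fun h => (Finset.mem_compl.mp i.2) ((key f hf i.1).mp h)
    have h2 : ∑ i : {x // x ∈ Sᶜ}, (f i.1 : ℕ)
        = ∑ i : {x // x ∈ Sᶜ}, (m + ((f i.1 : ℕ) - m)) :=
      Finset.sum_congr rfl fun i _ => by have := hge i; omega
    rw [h2, Finset.sum_add_distrib, Finset.sum_const, Finset.card_univ, Fintype.card_coe]
    simp only [smul_eq_mul]
    ring
end

section
/- Let F be a field, q ∈ F, and k, m ∈ ℕ. If f, g : ℕ → F satisfy 𝔇_k f = 0 and 𝔇_m g = 0, then their pointwise product satisfies 𝔇_{k+m}(f·g) = 0. That is, the product of a Gaussian polynomial function of degree at most k and one of degree at most m is a Gaussian polynomial function of degree at most k+m. -/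
/-- The operator `(D_j f)(n) = f(n+1) − q^j·f(n)`. -/
def Dop {R : Type*} [CommRing R] (q : R) (j : ℕ) (f : ℕ → R) : ℕ → R :=
  fun n => f (n + 1) - q ^ j * f n

/-- The operator `𝔇_d = D_0 ∘ D_1 ∘ ⋯ ∘ D_d`; a function `f : ℕ → R` is a Gaussian
polynomial function of degree at most `d` if `𝔇_d f = 0`. -/
def Dfull {R : Type*} [CommRing R] (q : R) : ℕ → (ℕ → R) → (ℕ → R)
  | 0 => Dop q 0
  | d + 1 => Dfull q d ∘ Dop q (d + 1)

lemma Dop_add' {R : Type*} [CommRing R] (q : R) (j : ℕ) (f g : ℕ → R) :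
    Dop q j (f + g) = Dop q j f + Dop q j g := by
  funext n; simp [Dop]; ring

lemma Dop_const_mul' {R : Type*} [CommRing R] (q : R) (j : ℕ) (c : R) (f : ℕ → R) :
    Dop q j (fun n => c * f n) = fun n => c * Dop q j f n := by
  funext n; simp [Dop]; ring

lemma Dop_zero_fn {R : Type*} [CommRing R] (q : R) (j : ℕ) :
    Dop q j (0 : ℕ → R) = 0 := by
  funext n; simp [Dop]

lemma Dfull_zero_fn {R : Type*} [CommRing R] (q : R) (d : ℕ) :
    Dfull q d (0 : ℕ → R) = 0 := by
  induction d with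
  | zero => exact Dop_zero_fn q 0
  | succ d ih => simp only [Dfull, Function.comp_apply, Dop_zero_fn, ih]

lemma Dfull_add' {R : Type*} [CommRing R] (q : R) (d : ℕ) (f g : ℕ → R) :
    Dfull q d (f + g) = Dfull q d f + Dfull q d g := by
  induction d generalizing f g with
  | zero => exact Dop_add' q 0 f g
  | succ d ih => simp only [Dfull, Function.comp_apply, Dop_add', ih]

lemma Dfull_const_mul' {R : Type*} [CommRing R] (q : R) (d : ℕ) (c : R) (f : ℕ → R) :
    Dfull q d (fun n => c * f n) = fun n => c * Dfull q d f n := by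
  induction d generalizing f with
  | zero => exact Dop_const_mul' q 0 c f
  | succ d ih => simp only [Dfull, Function.comp_apply, Dop_const_mul', ih]

lemma Dop_shift {R : Type*} [CommRing R] (q : R) (j : ℕ) (f : ℕ → R) :
    Dop q j (fun n => f (n + 1)) = fun n => Dop q j f (n + 1) := rfl

lemma Dfull_shift {R : Type*} [CommRing R] (q : R) (d : ℕ) (f : ℕ → R) :
    Dfull q d (fun n => f (n + 1)) = fun n => Dfull q d f (n + 1) := by
  induction d generalizing f with
  | zero => rfl
  | succ d ih => simp only [Dfull, Function.comp_apply, Dop_shift, ih]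

/-- The q-Leibniz-style splitting of `D_{k+m}` on a product. -/
lemma Dop_mul_split {R : Type*} [CommRing R] (q : R) (k m : ℕ) (f g : ℕ → R) :
    Dop q (k + m) (f * g)
      = (Dop q k f) * (fun n => g (n + 1)) + (fun n => q ^ k * (f * Dop q m g) n) := by
  funext n
  simp only [Dop, Pi.mul_apply, Pi.add_apply, pow_add]
  ring

lemma Dfull_mul_aux {R : Type*} [CommRing R] (q : R) (N : ℕ) :
    ∀ k m : ℕ, k + m ≤ N → ∀ f g : ℕ → R,
      Dfull q k f = 0 → Dfull q m g = 0 → Dfull q (k + m) (f * g) = 0 := by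
  induction N with
  | zero =>
    intro k m hkm f g hf hg
    obtain ⟨hk, hm⟩ : k = 0 ∧ m = 0 := by omega
    subst hk; subst hm
    have hf0 : Dop q 0 f = 0 := hf
    have hg0 : Dop q 0 g = 0 := hg
    show Dop q 0 (f * g) = 0
    rw [show (0 : ℕ) = 0 + 0 from rfl, Dop_mul_split, hf0, hg0]
    funext n; simp
  | succ N ih =>
    intro k m hkm f g hf hg
    rcases Nat.eq_zero_or_eq_succ_pred (k + m) with h0 | hsucc
    · -- k + m = 0
      obtain ⟨hk, hm⟩ : k = 0 ∧ m = 0 := by omega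
      subst hk; subst hm
      have hf0 : Dop q 0 f = 0 := hf
      have hg0 : Dop q 0 g = 0 := hg
      show Dop q 0 (f * g) = 0
      rw [show (0 : ℕ) = 0 + 0 from rfl, Dop_mul_split, hf0, hg0]
      funext n; simp
    · set t := (k + m).pred with ht
      have hkm' : k + m = t + 1 := hsucc
      -- Dfull q (k+m) (f*g) = Dfull q t (Dop q (k+m) (f*g))
      have key : Dfull q (k + m) (f * g)
          = Dfull q t (Dop q (k + m) (f * g)) := by
        rw [hkm']; rfl
      rw [key, Dop_mul_split, Dfull_add']
      -- first term
      have hA : Dfull q t ((Dop q k f) * (fun n => g (n + 1))) = 0 := by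
        rcases Nat.eq_zero_or_eq_succ_pred k with hk0 | hksucc
        · subst hk0
          have hf0 : Dop q 0 f = 0 := hf
          rw [hf0]
          have : (0 : ℕ → R) * (fun n => g (n + 1)) = 0 := by funext n; simp
          rw [this, Dfull_zero_fn]
        · set k' := k.pred with hk'
          have hk : k = k' + 1 := hksucc
          have hf' : Dfull q k' (Dop q k f) = 0 := by
            rw [hk] at hf ⊢; exact hf
          have hg' : Dfull q m (fun n => g (n + 1)) = 0 := by
            rw [Dfull_shift, hg]; funext n; simp
          have ht' : t = k' + m := by omega
          rw [ht']
          exact ih k' m (by omega) _ _ hf' hg'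
      -- second term
      have hB : Dfull q t (fun n => q ^ k * (f * Dop q m g) n) = 0 := by
        rcases Nat.eq_zero_or_eq_succ_pred m with hm0 | hmsucc
        · subst hm0
          have hg0 : Dop q 0 g = 0 := hg
          rw [hg0]
          have : (fun n => q ^ k * (f * (0 : ℕ → R)) n) = (0 : ℕ → R) := by
            funext n; simp
          rw [this, Dfull_zero_fn]
        · set m' := m.pred with hm'
          have hm : m = m' + 1 := hmsucc
          have hg' : Dfull q m' (Dop q m g) = 0 := by
            rw [hm] at hg ⊢; exact hg
          have ht' : t = k + m' := by omega
          rw [ht', Dfull_const_mul', ih k m' (by omega) _ _ hf hg']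
          funext n; simp
      rw [hA, hB]; simp

/-- The pointwise product of a Gaussian polynomial function of degree at most `k` and one
of degree at most `m` is a Gaussian polynomial function of degree at most `k + m`. -/
theorem Dfull_mul {F : Type*} [Field F] (q : F) (k m : ℕ) (f g : ℕ → F)
    (hf : Dfull q k f = 0) (hg : Dfull q m g = 0) : Dfull q (k + m) (f * g) = 0 := by
  exact Dfull_mul_aux q (k + m) k m le_rfl f g hf hg
end

section
/- Let F = ℚ(q) be the field of rational functions over ℚ in the variable q (in Lean, F = RatFunc ℚ with q = RatFunc.X), and let d ∈ ℕ. For n ∈ ℕ write [n]_q = Σ_{i < n} q^i ∈ F. Then the d + 1 functions n ↦ ([n]_q)^k, for k = 0, 1, …, d, form a basis of the F-vector space {f : ℕ → F | 𝔇_d f = 0} of Gaussian polynomial functions of degree at most d. -/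
/-- The `q`-analogue `[n]_q = Σ_{i < n} q^i` in `F = ℚ(q)`. -/
noncomputable def qNat (n : ℕ) : RatFunc ℚ :=
  ∑ i ∈ Finset.range n, RatFunc.X ^ i

set_option synthInstance.maxHeartbeats 1000000
set_option maxHeartbeats 1000000

namespace QNatAux

open Finset Polynomial

noncomputable abbrev F := RatFunc ℚ

/-- `Dop` as a linear map. -/
noncomputable def DopL (q : F) (j : ℕ) : (ℕ → F) →ₗ[F] (ℕ → F) where
  toFun := Dop q j
  map_add' f g := by funext n; simp [Dop]; ring
  map_smul' c f := by funext n; simp [Dop]; ring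

noncomputable def DfullL (q : F) : ℕ → ((ℕ → F) →ₗ[F] (ℕ → F))
  | 0 => DopL q 0
  | d + 1 => (DfullL q d).comp (DopL q (d + 1))

lemma DfullL_apply (q : F) (d : ℕ) (f : ℕ → F) : DfullL q d f = Dfull q d f := by
  induction d generalizing f with
  | zero => rfl
  | succ d ih => simp [DfullL, Dfull, LinearMap.comp_apply, ih]; rfl

noncomputable def qpow (k : ℕ) : ℕ → F := fun n => qNat n ^ k

lemma qNat_succ (n : ℕ) : qNat (n + 1) = RatFunc.X * qNat n + 1 := by
  simp [qNat, Finset.sum_range_succ', Finset.mul_sum, pow_succ, mul_comm, add_comm]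

lemma Dop_qpow (j k : ℕ) :
    Dop (RatFunc.X : F) j (qpow k) =
      (∑ i ∈ range k, (((k.choose i : F) * (RatFunc.X : F) ^ i) • qpow i))
        + (((RatFunc.X : F) ^ k - (RatFunc.X : F) ^ j) • qpow k) := by
  funext n
  simp only [Dop, qpow, Pi.add_apply, Finset.sum_apply, Pi.smul_apply, smul_eq_mul]
  rw [qNat_succ, add_pow, Finset.sum_range_succ]
  rw [Finset.sum_congr rfl (fun i _ => (by rw [mul_pow]; ring :
    (RatFunc.X * qNat n) ^ i * 1 ^ (k - i) * (k.choose i : F)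
      = (k.choose i : F) * RatFunc.X ^ i * qNat n ^ i))]
  simp [mul_pow]
  ring

end QNatAux

namespace QNatAux
open Finset Polynomial

/-- span of `qpow 0, …, qpow d` -/
noncomputable def V (d : ℕ) : Submodule F (ℕ → F) :=
  Submodule.span F (Set.range fun k : Fin (d + 1) => qpow (k : ℕ))

lemma qpow_mem_V {k d : ℕ} (h : k ≤ d) : qpow k ∈ V d :=
  Submodule.subset_span ⟨⟨k, Nat.lt_succ_of_le h⟩, rfl⟩

lemma Dop_qpow_mem {d k : ℕ} (hk : k ≤ d + 1) :
    DopL (RatFunc.X : F) (d + 1) (qpow k) ∈ V d := by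
  have : DopL (RatFunc.X : F) (d + 1) (qpow k) = Dop (RatFunc.X : F) (d + 1) (qpow k) := rfl
  rw [this, Dop_qpow]
  apply Submodule.add_mem
  · apply Submodule.sum_mem
    intro i hi
    have hi' := Finset.mem_range.mp hi
    exact Submodule.smul_mem _ _ (qpow_mem_V (by omega : i ≤ d))
  · rcases Nat.lt_or_ge k (d + 1) with h | h
    · exact Submodule.smul_mem _ _ (qpow_mem_V (by omega))
    · have : k = d + 1 := le_antisymm hk h
      subst this
      simp

lemma V_le_ker (d : ℕ) : V d ≤ LinearMap.ker (DfullL (RatFunc.X : F) d) := by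
  induction d with
  | zero =>
    rw [V, Submodule.span_le]
    rintro _ ⟨k, rfl⟩
    have hk : (k : ℕ) = 0 := by omega
    simp only [SetLike.mem_coe, LinearMap.mem_ker, hk]
    funext n
    show Dop (RatFunc.X : F) 0 (qpow 0) n = 0
    simp [Dop, qpow]
  | succ d ih =>
    rw [V, Submodule.span_le]
    rintro _ ⟨k, rfl⟩
    simp only [SetLike.mem_coe, LinearMap.mem_ker, DfullL, LinearMap.comp_apply]
    have := ih (Dop_qpow_mem (k := (k : ℕ)) (by omega))
    simpa using this

end QNatAux

namespace QNatAux
open Finset Polynomial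

lemma qNat_eq_algebraMap (n : ℕ) :
    qNat n = algebraMap (Polynomial ℚ) F (∑ i ∈ range n, Polynomial.X ^ i) := by
  simp [qNat, map_sum, map_pow, RatFunc.algebraMap_X]

lemma qNat_injective : Function.Injective qNat := by
  intro m n h
  rw [qNat_eq_algebraMap, qNat_eq_algebraMap] at h
  have h2 := RatFunc.algebraMap_injective ℚ h
  have := congrArg (Polynomial.eval (1 : ℚ)) h2
  simpa [Polynomial.eval_finset_sum] using this

lemma qpow_linearIndependent (d : ℕ) :
    LinearIndependent F (fun k : Fin (d + 1) => qpow (k : ℕ)) := by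
  rw [Fintype.linearIndependent_iff]
  intro g hg k
  set P : Polynomial F := ∑ j : Fin (d + 1), Polynomial.C (g j) * Polynomial.X ^ (j : ℕ) with hP
  have hroot : ∀ n : ℕ, P.IsRoot (qNat n) := by
    intro n
    have := congrFun hg n
    simp only [Finset.sum_apply, Pi.smul_apply, qpow, smul_eq_mul, Pi.zero_apply] at this
    simp [IsRoot, hP, Polynomial.eval_finset_sum, this]
  have hPzero : P = 0 := by
    apply Polynomial.eq_zero_of_infinite_isRoot
    exact Set.infinite_of_injective_forall_mem qNat_injective hroot
  have := congrArg (fun p => Polynomial.coeff p (k : ℕ)) hPzero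
  simp only [hP, Polynomial.finset_sum_coeff, Polynomial.coeff_C_mul,
    Polynomial.coeff_X_pow, Polynomial.coeff_zero, mul_ite, mul_one, mul_zero] at this
  rwa [Finset.sum_eq_single k (fun j _ hj => by
      simp [Fin.val_eq_val, (by simpa [eq_comm, Fin.ext_iff] using hj : ¬((k:ℕ) = (j:ℕ)))])
    (fun h => absurd (Finset.mem_univ k) h), if_pos rfl] at this

end QNatAux

namespace QNatAux
open Finset

lemma ker_zero : ∀ (d : ℕ) (f : ℕ → F), Dfull (RatFunc.X : F) d f = 0 →
    (∀ i ≤ d, f i = 0) → f = 0 := by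
  intro d
  induction d with
  | zero =>
    intro f hf h0
    funext n
    induction n with
    | zero => exact h0 0 le_rfl
    | succ n ih =>
      have := congrFun hf n
      simp only [Dfull, Dop, pow_zero, one_mul, Pi.zero_apply, sub_eq_zero] at this
      simp only [this, ih, Pi.zero_apply]
  | succ d ih =>
    intro f hf h0
    have hg : Dop (RatFunc.X : F) (d + 1) f = 0 := by
      apply ih
      · exact hf
      · intro i hi
        simp only [Dop, h0 (i + 1) (by omega), h0 i (by omega), mul_zero, sub_zero]
    funext n
    induction n with
    | zero => exact h0 0 (by omega)
    | succ n ihn =>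
      have := congrFun hg n
      simp only [Dop, Pi.zero_apply, sub_eq_zero] at this
      simp only [this, ihn, Pi.zero_apply, mul_zero]

noncomputable def ev (d : ℕ) : (ℕ → F) →ₗ[F] (Fin (d + 1) → F) :=
  LinearMap.funLeft F F (fun i : Fin (d + 1) => (i : ℕ))

lemma ev_inj {d : ℕ} {f g : ℕ → F} (hf : Dfull (RatFunc.X : F) d f = 0)
    (hg : Dfull (RatFunc.X : F) d g = 0) (h : ev d f = ev d g) : f = g := by
  have hker : Dfull (RatFunc.X : F) d (f - g) = 0 := by
    rw [← DfullL_apply, map_sub, DfullL_apply, DfullL_apply, hf, hg, sub_zero]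
  have := ker_zero d (f - g) hker (fun i hi => by
    have := congrFun h ⟨i, Nat.lt_succ_of_le hi⟩
    simpa [ev, LinearMap.funLeft, sub_eq_zero] using this)
  exact sub_eq_zero.mp this

end QNatAux

namespace QNatAux
open Finset

lemma Dfull_sum_smul {d : ℕ} (c : Fin (d + 1) → F) :
    Dfull (RatFunc.X : F) d (∑ k : Fin (d + 1), c k • qpow (k : ℕ)) = 0 := by
  rw [← DfullL_apply]
  have hmem : (∑ k : Fin (d + 1), c k • qpow (k : ℕ)) ∈ V d :=
    Submodule.sum_mem _ fun k _ =>
      Submodule.smul_mem _ _ (Submodule.subset_span ⟨k, rfl⟩)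
  exact V_le_ker d hmem

lemma ev_sum_smul {d : ℕ} (c : Fin (d + 1) → F) :
    ev d (∑ k : Fin (d + 1), c k • qpow (k : ℕ))
      = ∑ k : Fin (d + 1), c k • ev d (qpow (k : ℕ)) := by
  rw [map_sum]
  exact Finset.sum_congr rfl fun k _ => (ev d).map_smul _ _

lemma ev_qpow_linearIndependent (d : ℕ) :
    LinearIndependent F (fun k : Fin (d + 1) => ev d (qpow (k : ℕ))) := by
  rw [Fintype.linearIndependent_iff]
  intro g hg
  have h0 : (∑ k : Fin (d + 1), g k • qpow (k : ℕ)) = 0 := by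
    apply ev_inj (Dfull_sum_smul g)
    · rw [← DfullL_apply, map_zero]
    · rw [ev_sum_smul, hg, map_zero]
  exact Fintype.linearIndependent_iff.mp (qpow_linearIndependent d) g h0

end QNatAux

set_option synthInstance.maxHeartbeats 1000000 in
/-- Over `F = ℚ(q)` with `q = X`, the `d + 1` functions `n ↦ ([n]_q)^k`, `k = 0, …, d`,
form a basis of the space of Gaussian polynomial functions of degree at most `d`: each
lies in the space, they are linearly independent, and they span it. -/
theorem qNat_pow_basis (d : ℕ) :
    (∀ k : Fin (d + 1), Dfull (RatFunc.X : RatFunc ℚ) d (fun n => qNat n ^ (k : ℕ)) = 0) ∧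
    LinearIndependent (RatFunc ℚ)
      (fun (k : Fin (d + 1)) => (fun n => qNat n ^ (k : ℕ) : ℕ → RatFunc ℚ)) ∧
    ∀ f : ℕ → RatFunc ℚ, Dfull (RatFunc.X : RatFunc ℚ) d f = 0 →
      ∃! c : Fin (d + 1) → RatFunc ℚ,
        f = ∑ k : Fin (d + 1), c k • ((fun n => qNat n ^ (k : ℕ)) : ℕ → RatFunc ℚ) := by
  classical
  open QNatAux in
  refine ⟨?_, ?_, ?_⟩
  · intro k
    have : qpow (k : ℕ) ∈ V d := qpow_mem_V (by omega)
    have h := V_le_ker d this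
    rw [LinearMap.mem_ker, DfullL_apply] at h
    exact h
  · exact qpow_linearIndependent d
  · intro f hf
    -- spanning
    have hcard : Fintype.card (Fin (d + 1)) = Module.finrank F (Fin (d + 1) → F) := by
      simp [Module.finrank_fin_fun]
    have hspan : Submodule.span F (Set.range fun k : Fin (d + 1) => ev d (qpow (k : ℕ))) = ⊤ :=
      (ev_qpow_linearIndependent d).span_eq_top_of_card_eq_finrank hcard
    have hmem : ev d f ∈ Submodule.span F
        (Set.range fun k : Fin (d + 1) => ev d (qpow (k : ℕ))) := by
      rw [hspan]; trivial
    obtain ⟨c, hc⟩ := Submodule.mem_span_range_iff_exists_fun F |>.mp hmem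
    refine ⟨c, ?_, ?_⟩
    · apply ev_inj hf (Dfull_sum_smul c)
      rw [ev_sum_smul, hc]
    · intro c' hc'
      have h0 : (∑ k : Fin (d + 1), (c' k - c k) • qpow (k : ℕ)) = 0 := by
        have hfe : f = ∑ k : Fin (d + 1), c k • qpow (k : ℕ) := by
          apply ev_inj hf (Dfull_sum_smul c)
          rw [ev_sum_smul, hc]
        calc (∑ k : Fin (d + 1), (c' k - c k) • qpow (k : ℕ))
            = (∑ k : Fin (d + 1), c' k • qpow (k : ℕ))
              - ∑ k : Fin (d + 1), c k • qpow (k : ℕ) := by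
              rw [← Finset.sum_sub_distrib]
              exact Finset.sum_congr rfl fun k _ => sub_smul _ _ _
          _ = f - f := by rw [← hfe]; congr 1; exact hc'.symm
          _ = 0 := sub_self f
      have := Fintype.linearIndependent_iff.mp (qpow_linearIndependent d) _ h0
      funext k
      have hk := this k
      rwa [sub_eq_zero] at hk
end
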